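/- Let K ≥ 1 and let g_1, …, g_T : {1,…,K} → [0,1] be an arbitrary sequence of reward functions. Let p_1 be the uniform distribution on {1,…,K} and for t ≥ 2 define the Multiplicative Weights distributions p_t[a] = exp(η_t · Σ_{τ=1}^{t−1} g_τ(a)) / Σ_{b=1}^{K} exp(η_t · Σ_{τ=1}^{t−1} g_τ(b)). If the learning rates η_1 ≥ η_2 ≥ … ≥ η_T > 0 form a nonincreasing positive sequence, then for every action a⋆ ∈ {1,…,K}: Σ_{t=1}^T g_t(a⋆) − Σ_{t=1}^T Σ_{a=1}^K p_t[a]·g_t(a) ≤ (log K)/η_T + (Σ_{t=1}^T η_t)/8. -/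

import Mathlib

open Finset

lemma scalar_hoeff (μ : ℝ) (hμ0 : 0 ≤ μ) (hμ1 : μ ≤ 1) {s : ℝ} (hs : 0 ≤ s) :
    Real.log (1 - μ + μ * Real.exp s) ≤ s * μ + s ^ 2 / 8 := by
  set D : ℝ → ℝ := fun u => 1 - μ + μ * Real.exp u with hDdef
  have hDpos : ∀ u : ℝ, 0 < D u := by
    intro u
    have h1 : 0 ≤ μ * Real.exp u := mul_nonneg hμ0 (Real.exp_pos u).le
    rcases eq_or_lt_of_le hμ0 with h | h
    · simp only [hDdef, ← h]; norm_num
    · have h2 : 0 < μ * Real.exp u := mul_pos h (Real.exp_pos u)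
      simp only [hDdef]; linarith
  have hD : ∀ u : ℝ, HasDerivAt D (μ * Real.exp u) u := by
    intro u
    exact ((Real.hasDerivAt_exp u).const_mul μ).const_add (1 - μ)
  -- inner derivative function
  set h : ℝ → ℝ := fun u => μ + u / 4 - μ * Real.exp u / D u with hhdef
  have hh : ∀ u : ℝ, HasDerivAt h
      (1 / 4 - (μ * Real.exp u * D u - μ * Real.exp u * (μ * Real.exp u)) / (D u) ^ 2) u := by
    intro u
    have h1 : HasDerivAt (fun u : ℝ => μ * Real.exp u) (μ * Real.exp u) u :=
      (Real.hasDerivAt_exp u).const_mul μ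
    have h2 : HasDerivAt (fun u : ℝ => μ * Real.exp u / D u)
        ((μ * Real.exp u * D u - μ * Real.exp u * (μ * Real.exp u)) / (D u) ^ 2) u :=
      h1.div (hD u) (hDpos u).ne'
    have h3 : HasDerivAt (fun u : ℝ => μ + u / 4) (1 / 4) u := by
      simpa using ((hasDerivAt_id u).div_const 4).const_add μ
    exact h3.sub h2
  have hh' : ∀ u : ℝ,
      0 ≤ 1 / 4 - (μ * Real.exp u * D u - μ * Real.exp u * (μ * Real.exp u)) / (D u) ^ 2 := by
    intro u
    have hD2 : 0 < (D u) ^ 2 := pow_pos (hDpos u) 2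
    rw [sub_nonneg]
    generalize hm : μ * Real.exp u = m
    generalize hd : D u = d at hD2
    rw [div_le_iff₀ hD2]
    nlinarith [sq_nonneg (d - 2 * m)]
  have hhmono : MonotoneOn h (Set.Ici (0 : ℝ)) := by
    apply monotoneOn_of_deriv_nonneg (convex_Ici 0)
    · exact fun u _ => ((hh u).continuousAt).continuousWithinAt
    · exact fun u _ => ((hh u).differentiableAt).differentiableWithinAt
    · intro u _
      rw [(hh u).deriv]
      exact hh' u
  have hh0 : h 0 = 0 := by
    simp only [hhdef, hDdef]
    simp
  have hhnonneg : ∀ u : ℝ, 0 ≤ u → 0 ≤ h u := by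
    intro u hu
    have := hhmono (Set.self_mem_Ici) (Set.mem_Ici.2 hu) hu
    rwa [hh0] at this
  -- outer function
  set G : ℝ → ℝ := fun u => u * μ + u ^ 2 / 8 - Real.log (D u) with hGdef
  have hG : ∀ u : ℝ, HasDerivAt G (h u) u := by
    intro u
    have h1 : HasDerivAt (fun u : ℝ => u * μ + u ^ 2 / 8) (μ + u / 4) u := by
      have := ((hasDerivAt_pow 2 u).div_const 8).const_add 0
      have h2 : HasDerivAt (fun u : ℝ => u * μ) μ u := by
        simpa using (hasDerivAt_id u).mul_const μ
      have h3 : HasDerivAt (fun u : ℝ => u ^ 2 / 8) (u / 4) u := by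
        have := (hasDerivAt_pow 2 u).div_const 8
        refine this.congr_deriv ?_
        ring
      exact h2.add h3
    have h2 : HasDerivAt (fun u : ℝ => Real.log (D u)) (μ * Real.exp u / D u) u :=
      (hD u).log (hDpos u).ne'
    exact h1.sub h2
  have hGmono : MonotoneOn G (Set.Ici (0 : ℝ)) := by
    apply monotoneOn_of_deriv_nonneg (convex_Ici 0)
    · exact fun u _ => ((hG u).continuousAt).continuousWithinAt
    · exact fun u _ => ((hG u).differentiableAt).differentiableWithinAt
    · intro u hu
      rw [(hG u).deriv]
      exact hhnonneg u (le_of_lt (by simpa using hu))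
  have hG0 : G 0 = 0 := by
    simp only [hGdef, hDdef]
    simp
  have := hGmono (Set.self_mem_Ici) (Set.mem_Ici.2 hs) hs
  rw [hG0] at this
  simp only [hGdef] at this
  linarith


lemma finite_hoeff {K : ℕ} (p x : Fin K → ℝ) (hp : ∀ a, 0 ≤ p a)
    (hsum : ∑ a, p a = 1) (hx : ∀ a, x a ∈ Set.Icc (0:ℝ) 1) {e : ℝ} (he : 0 ≤ e) :
    Real.log (∑ a, p a * Real.exp (e * x a)) ≤ e * (∑ a, p a * x a) + e ^ 2 / 8 := by
  set μ : ℝ := ∑ a, p a * x a with hμdef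
  have hμ0 : 0 ≤ μ := Finset.sum_nonneg fun a _ => mul_nonneg (hp a) (hx a).1
  have hμ1 : μ ≤ 1 := by
    calc μ ≤ ∑ a, p a := Finset.sum_le_sum fun a _ =>
            mul_le_of_le_one_right (hp a) (hx a).2
      _ = 1 := hsum
  have hpos : (0:ℝ) < ∑ a, p a * Real.exp (e * x a) := by
    have : (1:ℝ) ≤ ∑ a, p a * Real.exp (e * x a) := by
      rw [← hsum]
      refine Finset.sum_le_sum fun a _ => ?_
      have h1 : (1:ℝ) ≤ Real.exp (e * x a) := by
        rw [Real.one_le_exp_iff]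
        exact mul_nonneg he (hx a).1
      nlinarith [hp a]
    linarith
  have hchord : ∑ a, p a * Real.exp (e * x a) ≤ 1 - μ + μ * Real.exp e := by
    have h1 : ∀ a, Real.exp (e * x a) ≤ (1 - x a) + x a * Real.exp e := by
      intro a
      have := convexOn_exp.2 (Set.mem_univ (0:ℝ)) (Set.mem_univ e)
        (by linarith [(hx a).2] : 0 ≤ 1 - x a) (hx a).1 (by ring)
      simpa [smul_eq_mul, mul_comm] using this
    calc ∑ a, p a * Real.exp (e * x a)
        ≤ ∑ a, p a * ((1 - x a) + x a * Real.exp e) :=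
          Finset.sum_le_sum fun a _ => mul_le_mul_of_nonneg_left (h1 a) (hp a)
      _ = 1 - μ + μ * Real.exp e := by
          have h2 : ∀ a : Fin K, p a * ((1 - x a) + x a * Real.exp e)
              = p a - p a * x a + (p a * x a) * Real.exp e := fun a => by ring
          simp only [h2, Finset.sum_add_distrib, Finset.sum_sub_distrib, hsum,
            ← Finset.sum_mul, hμdef]
  calc Real.log (∑ a, p a * Real.exp (e * x a))
      ≤ Real.log (1 - μ + μ * Real.exp e) := Real.log_le_log hpos hchord
    _ ≤ e * μ + e ^ 2 / 8 := by
        have := scalar_hoeff μ hμ0 hμ1 he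
        linarith

lemma eta_mono {K : ℕ} (hK : 1 ≤ K) (S : Fin K → ℝ) {e e' : ℝ} (he' : 0 < e') (hee : e' ≤ e) :
    Real.log ((∑ b, Real.exp (e' * S b)) / K) / e'
      ≤ Real.log ((∑ b, Real.exp (e * S b)) / K) / e := by
  have he : 0 < e := lt_of_lt_of_le he' hee
  have hKpos : (0:ℝ) < K := by exact_mod_cast hK
  have hq : (1:ℝ) ≤ e / e' := (one_le_div he').2 hee
  have hsum' : (0:ℝ) < ∑ b, Real.exp (e' * S b) := by
    apply Finset.sum_pos (fun b _ => Real.exp_pos _)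
    exact ⟨⟨0, hK⟩, Finset.mem_univ _⟩
  have key : ((∑ b, Real.exp (e' * S b)) / K) ^ (e / e')
      ≤ (∑ b, Real.exp (e * S b)) / K := by
    have := Real.rpow_arith_mean_le_arith_mean_rpow Finset.univ
      (fun _ : Fin K => (K:ℝ)⁻¹) (fun b => Real.exp (e' * S b))
      (fun _ _ => by positivity)
      (by simp [Finset.card_univ]; field_simp)
      (fun b _ => (Real.exp_pos _).le) hq
    calc ((∑ b, Real.exp (e' * S b)) / K) ^ (e / e')
        = (∑ b : Fin K, (K:ℝ)⁻¹ * Real.exp (e' * S b)) ^ (e / e') := by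
          rw [← Finset.mul_sum]; ring_nf
      _ ≤ ∑ b : Fin K, (K:ℝ)⁻¹ * Real.exp (e' * S b) ^ (e / e') := this
      _ = (∑ b, Real.exp (e * S b)) / K := by
          rw [← Finset.mul_sum, div_eq_mul_inv, mul_comm]
          congr 1
          refine Finset.sum_congr rfl fun b _ => ?_
          rw [← Real.exp_mul]
          congr 1
          field_simp
  have hlog := Real.log_le_log (Real.rpow_pos_of_pos (by positivity) _) key
  rw [Real.log_rpow (by positivity)] at hlog
  rw [div_le_div_iff₀ he' he]
  calc Real.log ((∑ b, Real.exp (e' * S b)) / K) * e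
      = (e / e' * Real.log ((∑ b, Real.exp (e' * S b)) / K)) * e' := by field_simp
    _ ≤ Real.log ((∑ b, Real.exp (e * S b)) / K) * e' :=
        mul_le_mul_of_nonneg_right hlog he'.le


theorem mw_regret_bound
    (K T : ℕ) (hK : 1 ≤ K) (hT : 0 < T)
    (g : ℕ → Fin K → ℝ)
    (hg : ∀ t < T, ∀ a : Fin K, g t a ∈ Set.Icc (0 : ℝ) 1)
    (η : ℕ → ℝ)
    (hη_pos : ∀ t < T, 0 < η t)
    (hη_mono : ∀ s t : ℕ, s ≤ t → t < T → η t ≤ η s)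
    (p : ℕ → Fin K → ℝ)
    (hp : ∀ t < T, ∀ a : Fin K,
      p t a = Real.exp (η t * ∑ τ ∈ Finset.range t, g τ a) /
        ∑ b : Fin K, Real.exp (η t * ∑ τ ∈ Finset.range t, g τ b))
    (astar : Fin K) :
    ∑ t ∈ Finset.range T, g t astar
      - ∑ t ∈ Finset.range T, ∑ a : Fin K, p t a * g t a
    ≤ Real.log K / η (T - 1) + (∑ t ∈ Finset.range T, η t) / 8 := by
  have hKne : Finset.univ.Nonempty (α := Fin K) := by
    exact ⟨⟨0, hK⟩, Finset.mem_univ _⟩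
  have hKpos : (0:ℝ) < K := by exact_mod_cast hK
  set S : ℕ → Fin K → ℝ := fun t a => ∑ τ ∈ Finset.range t, g τ a with hSdef
  set A : ℕ → ℝ → ℝ := fun t e => ∑ b, Real.exp (e * S t b) with hAdef
  have hApos : ∀ t e, 0 < A t e := fun t e =>
    Finset.sum_pos (fun b _ => Real.exp_pos _) hKne
  set B : ℕ → ℝ → ℝ := fun t e => Real.log (A t e / K) / e with hBdef
  -- main induction
  have main : ∀ t ≤ T, B t (η (min t (T - 1)))
      ≤ ∑ τ ∈ Finset.range t, ((∑ a, p τ a * g τ a) + η τ / 8) := by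
    intro t
    induction t with
    | zero =>
      intro _
      have h0 : ∀ e : ℝ, A 0 e = K := fun e => by
        simp [hAdef, hSdef, Finset.card_univ]
      simp [hBdef, h0, div_self hKpos.ne']
    | succ t ih =>
      intro ht
      have htT : t < T := ht
      have hmt : min t (T - 1) = t := by omega
      have he : 0 < η t := hη_pos t htT
      -- monotonicity step
      set idx := min (t + 1) (T - 1) with hidx
      have hidxT : idx < T := by omega
      have htidx : t ≤ idx := by omega
      have step1 : B (t+1) (η idx) ≤ B (t+1) (η t) :=
        eta_mono hK (S (t+1)) (hη_pos idx hidxT) (hη_mono t idx htidx hidxT)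
      -- Hoeffding step
      have hApt : ∀ a, p t a = Real.exp (η t * S t a) / A t (η t) := hp t htT
      have hpn : ∀ a, 0 ≤ p t a := fun a => by
        rw [hApt a]; positivity
      have hps : ∑ a, p t a = 1 := by
        simp only [hApt]
        rw [← Finset.sum_div]
        exact div_self (hApos t (η t)).ne'
      have hQ : A (t+1) (η t) = A t (η t) * ∑ a, p t a * Real.exp (η t * g t a) := by
        simp only [hApt]
        rw [Finset.mul_sum]
        refine Finset.sum_congr rfl fun b _ => ?_
        rw [hAdef]
        simp only [hSdef]
        rw [Finset.sum_range_succ, mul_add, Real.exp_add]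
        field_simp
      have hQpos : 0 < ∑ a, p t a * Real.exp (η t * g t a) := by
        have h := hApos (t+1) (η t)
        rw [hQ] at h
        rcases mul_pos_iff.mp h with ⟨_, h2⟩ | ⟨h1, _⟩
        · exact h2
        · linarith [hApos t (η t)]
      have hhoeff := finite_hoeff (p t) (g t) hpn hps (hg t htT) he.le
      have step2 : B (t+1) (η t) ≤ B t (η t) + ((∑ a, p t a * g t a) + η t / 8) := by
        have hlog : Real.log (A (t+1) (η t) / K)
            = Real.log (A t (η t) / K) + Real.log (∑ a, p t a * Real.exp (η t * g t a)) := by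
          have heq : A t (η t) * (∑ a, p t a * Real.exp (η t * g t a)) / K
              = (A t (η t) / K) * (∑ a, p t a * Real.exp (η t * g t a)) := by ring
          rw [hQ, heq, Real.log_mul (ne_of_gt (div_pos (hApos _ _) hKpos)) hQpos.ne']
        have h2 : Real.log (∑ a, p t a * Real.exp (η t * g t a)) / η t
            ≤ (∑ a, p t a * g t a) + η t / 8 := by
          rw [div_le_iff₀ he]
          calc Real.log (∑ a, p t a * Real.exp (η t * g t a))
              ≤ η t * (∑ a, p t a * g t a) + η t ^ 2 / 8 := hhoeff
            _ = ((∑ a, p t a * g t a) + η t / 8) * η t := by ring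
        simp only [hBdef]
        rw [hlog, add_div]
        linarith
      have ihh := ih htT.le
      rw [hmt] at ihh
      calc B (t+1) (η idx) ≤ B (t+1) (η t) := step1
        _ ≤ B t (η t) + ((∑ a, p t a * g t a) + η t / 8) := step2
        _ ≤ (∑ τ ∈ Finset.range t, ((∑ a, p τ a * g τ a) + η τ / 8))
              + ((∑ a, p t a * g t a) + η t / 8) := by linarith
        _ = ∑ τ ∈ Finset.range (t+1), ((∑ a, p τ a * g τ a) + η τ / 8) := by
          rw [Finset.sum_range_succ]
  have hmain := main T le_rfl
  have hminT : min T (T - 1) = T - 1 := by omega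
  rw [hminT] at hmain
  -- lower bound on potential
  have heT : 0 < η (T - 1) := hη_pos (T-1) (by omega)
  have hlower : S T astar - Real.log K / η (T - 1) ≤ B T (η (T - 1)) := by
    have h1 : Real.exp (η (T-1) * S T astar) ≤ A T (η (T-1)) :=
      Finset.single_le_sum (f := fun b => Real.exp (η (T-1) * S T b))
        (fun b _ => (Real.exp_pos _).le) (Finset.mem_univ astar)
    have h2 : η (T-1) * S T astar - Real.log K ≤ Real.log (A T (η (T-1)) / K) := by
      rw [Real.log_div (hApos _ _).ne' hKpos.ne']
      have := Real.log_le_log (Real.exp_pos _) h1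
      rw [Real.log_exp] at this
      linarith
    show _ ≤ Real.log (A T (η (T - 1)) / K) / η (T - 1)
    rw [le_div_iff₀ heT]
    calc (S T astar - Real.log K / η (T-1)) * η (T-1)
        = η (T-1) * S T astar - Real.log K := by field_simp
      _ ≤ Real.log (A T (η (T-1)) / K) := h2
  have hsplit : ∑ τ ∈ Finset.range T, ((∑ a, p τ a * g τ a) + η τ / 8)
      = (∑ τ ∈ Finset.range T, ∑ a, p τ a * g τ a) + (∑ τ ∈ Finset.range T, η τ) / 8 := by
    rw [Finset.sum_add_distrib, Finset.sum_div]
  rw [hsplit] at hmain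
  have hl2 : ∑ t ∈ Finset.range T, g t astar - Real.log K / η (T - 1)
      ≤ B T (η (T - 1)) := hlower
  linarith
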